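/- arXiv:2404.00329 — 3 statements merged into one kernel-verified Lean document; each statement's English description precedes it below -/
import Mathlib

section
/- Let ν be a nonnegative function on dyadic cubes satisfying ν(P) ≤ θ^k ν(Q) whenever P ⊆ Q are dyadic cubes with ℓ(P) = 2^{-k}ℓ(Q), for some fixed θ ∈ (0,1), together with additivity Σ_{P child of Q} ν(P) = ν(Q). Fix 1 ≤ p < ∞. Then the linear operator M' defined on nonnegative sequences R = {R_P}_{P∈D} by M'(R)(Q) := (1/ν(Q)) Σ_{P∈D, P⊆Q} ν(P) R_P is bounded on ℓ^p(D): there exists a constant C = C(θ, p, n) with ‖M'(R)‖_{ℓ^p} ≤ C ‖R‖_{ℓ^p}. -/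
open MeasureTheory Filter
open scoped ENNReal BigOperators

noncomputable section

def cube (n : ℕ) (c : Fin n → ℝ) (l : ℝ) : Set (Fin n → ℝ) :=
  {x | ∀ i, c i ≤ x i ∧ x i < c i + l}

def IsApBound (n : ℕ) (p : ℝ) (w : (Fin n → ℝ) → ℝ) (C : ℝ) : Prop :=
  ∀ c : Fin n → ℝ, ∀ l : ℝ, 0 < l →
    ((volume (cube n c l)).toReal⁻¹ * ∫ x in cube n c l, w x) *
      ((volume (cube n c l)).toReal⁻¹ * ∫ x in cube n c l, (w x) ^ (-(1/(p-1)) : ℝ)) ^ (p-1) ≤ C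

structure DyadicCube (n : ℕ) where
  k : ℤ
  m : Fin n → ℤ

def DyadicCube.side {n : ℕ} (Q : DyadicCube n) : ℝ := (2:ℝ) ^ (-Q.k)

def DyadicCube.corner {n : ℕ} (Q : DyadicCube n) : Fin n → ℝ :=
  fun i => (Q.m i : ℝ) * (2:ℝ) ^ (-Q.k)

def DyadicCube.toSet {n : ℕ} (Q : DyadicCube n) : Set (Fin n → ℝ) :=
  cube n Q.corner Q.side

def haar1 (ε : Bool) (a l : ℝ) (x : ℝ) : ℝ :=
  if ε = true then (if a ≤ x ∧ x < a + l then l ^ (-(1/2) : ℝ) else 0)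
  else (if a ≤ x ∧ x < a + l/2 then l ^ (-(1/2) : ℝ)
        else if a + l/2 ≤ x ∧ x < a + l then -(l ^ (-(1/2) : ℝ)) else 0)

def haarCube (n : ℕ) (ε : Fin n → Bool) (a : Fin n → ℝ) (l : ℝ) (x : Fin n → ℝ) : ℝ :=
  ∏ i, haar1 (ε i) (a i) l (x i)

def haarD {n : ℕ} (Q : DyadicCube n) (ε : Fin n → Bool) : (Fin n → ℝ) → ℝ :=
  fun x => haarCube n ε Q.corner Q.side x

namespace DyadicCube

variable {n : ℕ}

lemma side_pos (Q : DyadicCube n) : 0 < Q.side := zpow_pos (by norm_num) _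

lemma mem_toSet {Q : DyadicCube n} {x : Fin n → ℝ} :
    x ∈ Q.toSet ↔ ∀ i, Q.corner i ≤ x i ∧ x i < Q.corner i + Q.side := Iff.rfl

lemma corner_mem (Q : DyadicCube n) : Q.corner ∈ Q.toSet :=
  fun i => ⟨le_rfl, lt_add_of_pos_right _ Q.side_pos⟩

lemma subset_iff {P Q : DyadicCube n} :
    P.toSet ⊆ Q.toSet ↔
      ∀ i, Q.corner i ≤ P.corner i ∧ P.corner i + P.side ≤ Q.corner i + Q.side := by
  constructor
  · intro h i
    have hIco : Set.Ico (P.corner i) (P.corner i + P.side)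
        ⊆ Set.Ico (Q.corner i) (Q.corner i + Q.side) := by
      intro t ht
      have hmem : (fun j => if j = i then t else P.corner j) ∈ P.toSet := by
        intro j
        by_cases hj : j = i
        · subst hj; simp only [if_pos rfl]; exact ⟨ht.1, ht.2⟩
        · simp only [if_neg hj]
          exact ⟨le_rfl, lt_add_of_pos_right _ P.side_pos⟩
      have := h hmem i
      simpa using this
    rw [Set.Ico_subset_Ico_iff (lt_add_of_pos_right _ P.side_pos)] at hIco
    exact hIco
  · intro h x hx i
    obtain ⟨h1, h2⟩ := h i
    obtain ⟨hx1, hx2⟩ := hx i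
    exact ⟨h1.trans hx1, hx2.trans_le h2⟩

lemma k_le_of_subset (hn : 0 < n) {P Q : DyadicCube n} (h : P.toSet ⊆ Q.toSet) :
    Q.k ≤ P.k := by
  obtain ⟨h1, h2⟩ := subset_iff.mp h ⟨0, hn⟩
  have hside : P.side ≤ Q.side := by linarith
  have : (2:ℝ) ^ (-P.k) ≤ 2 ^ (-Q.k) := hside
  rw [zpow_le_zpow_iff_right₀ (by norm_num : (1:ℝ) < 2)] at this
  omega

lemma side_eq (Q : DyadicCube n) : Q.side = (2:ℝ) ^ (-Q.k) := rfl

/-- key arithmetic: if `Q.k ≤ P.k`, then `Q.side = 2^(P.k-Q.k).toNat * P.side`. -/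
lemma side_ratio {P Q : DyadicCube n} (h : Q.k ≤ P.k) :
    Q.side = ((2:ℤ) ^ (P.k - Q.k).toNat : ℤ) * P.side := by
  have ht : ((P.k - Q.k).toNat : ℤ) = P.k - Q.k := Int.toNat_of_nonneg (by omega)
  have : (((2:ℤ) ^ (P.k - Q.k).toNat : ℤ) : ℝ) = (2:ℝ) ^ ((P.k - Q.k) : ℤ) := by
    push_cast
    rw [← zpow_natCast (2:ℝ) (P.k - Q.k).toNat, ht]
  rw [side_eq, side_eq, this, ← zpow_add₀ (by norm_num : (2:ℝ) ≠ 0)]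
  ring_nf

lemma subset_of_mem_mem {P Q : DyadicCube n} {x : Fin n → ℝ} (hk : Q.k ≤ P.k)
    (hxP : x ∈ P.toSet) (hxQ : x ∈ Q.toSet) : P.toSet ⊆ Q.toSet := by
  rw [subset_iff]
  intro i
  set D : ℤ := (2:ℤ) ^ (P.k - Q.k).toNat with hD
  have hDpos : (0:ℤ) < D := pow_pos (by norm_num) _
  have hs : Q.side = (D : ℝ) * P.side := side_ratio hk
  have hl : (0:ℝ) < P.side := P.side_pos
  obtain ⟨hP1, hP2⟩ := hxP i
  obtain ⟨hQ1, hQ2⟩ := hxQ i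
  have hcP : P.corner i = (P.m i : ℝ) * P.side := rfl
  have hcQ : Q.corner i = (Q.m i : ℝ) * Q.side := rfl
  -- integer inequalities
  have key1 : Q.m i * D ≤ P.m i := by
    have : (Q.m i : ℝ) * D * P.side < ((P.m i : ℝ) + 1) * P.side := by
      rw [hcQ, hs] at hQ1; rw [hcP] at hP2; nlinarith
    have : (Q.m i : ℝ) * D < (P.m i : ℝ) + 1 := by
      exact lt_of_mul_lt_mul_right this hl.le
    have : Q.m i * D < P.m i + 1 := by exact_mod_cast this
    omega
  have key2 : P.m i + 1 ≤ (Q.m i + 1) * D := by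
    have : (P.m i : ℝ) * P.side < ((Q.m i : ℝ) + 1) * D * P.side := by
      rw [hcQ, hs] at hQ2; rw [hcP] at hP1; nlinarith
    have : (P.m i : ℝ) < ((Q.m i : ℝ) + 1) * D := by
      exact lt_of_mul_lt_mul_right this hl.le
    have : P.m i < (Q.m i + 1) * D := by exact_mod_cast this
    omega
  constructor
  · rw [hcP, hcQ, hs]
    have : ((Q.m i * D : ℤ) : ℝ) ≤ ((P.m i : ℤ) : ℝ) := by exact_mod_cast key1
    push_cast at this ⊢
    nlinarith
  · rw [hcP, hcQ, hs]
    have hPside : P.side = (2:ℝ)^(-P.k) := rfl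
    have : (((P.m i + 1) : ℤ) : ℝ) ≤ (((Q.m i + 1) * D : ℤ) : ℝ) := by exact_mod_cast key2
    push_cast at this ⊢
    have h2 : Q.side = (D:ℝ) * P.side := hs
    nlinarith

lemma eq_of_subset_of_k_eq {P Q : DyadicCube n} (h : P.toSet ⊆ Q.toSet)
    (hk : P.k = Q.k) : P = Q := by
  have hm : P.m = Q.m := by
    funext i
    obtain ⟨h1, h2⟩ := subset_iff.mp h i
    have hside : P.side = Q.side := by rw [side_eq, side_eq, hk]
    have hcorner : P.corner i = Q.corner i := by
      rw [hside] at h2; linarith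
    have : (P.m i : ℝ) * (2:ℝ)^(-P.k) = (Q.m i : ℝ) * (2:ℝ)^(-Q.k) := hcorner
    rw [hk] at this
    have := mul_right_cancel₀ (ne_of_gt (zpow_pos (by norm_num : (0:ℝ)<2) (-Q.k))) this
    exact_mod_cast this
  cases P; cases Q
  simp_all

/-- The dyadic ancestor of `P` at level `k'`. -/
def anc (P : DyadicCube n) (k' : ℤ) : DyadicCube n :=
  ⟨k', fun i => P.m i / 2 ^ (P.k - k').toNat⟩

@[simp] lemma anc_k (P : DyadicCube n) (k' : ℤ) : (anc P k').k = k' := rfl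

lemma subset_anc {P : DyadicCube n} {k' : ℤ} (h : k' ≤ P.k) :
    P.toSet ⊆ (anc P k').toSet := by
  rw [subset_iff]
  intro i
  set D : ℤ := (2:ℤ) ^ (P.k - k').toNat with hD
  have hDpos : (0:ℤ) < D := pow_pos (by norm_num) _
  have hk : (anc P k').k = k' := rfl
  have hs : (anc P k').side = (D : ℝ) * P.side := by
    have := side_ratio (P := P) (Q := anc P k') (by rw [hk]; exact h)
    rw [this, hk]
  have hl : (0:ℝ) < P.side := P.side_pos
  set q : ℤ := P.m i / D with hq
  have hmodnn : 0 ≤ P.m i % D := Int.emod_nonneg _ (ne_of_gt hDpos)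
  have hmodlt : P.m i % D < D := Int.emod_lt_of_pos _ hDpos
  have hdm : D * q + P.m i % D = P.m i := Int.mul_ediv_add_emod _ _
  have key1 : q * D ≤ P.m i := by rw [mul_comm]; omega
  have key2 : P.m i + 1 ≤ (q + 1) * D := by rw [add_mul, one_mul, mul_comm]; omega
  have hcP : P.corner i = (P.m i : ℝ) * P.side := rfl
  have hcA : (anc P k').corner i = (q : ℝ) * (anc P k').side := rfl
  constructor
  · rw [hcP, hcA, hs]
    have : ((q * D : ℤ) : ℝ) ≤ ((P.m i : ℤ) : ℝ) := by exact_mod_cast key1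
    push_cast at this ⊢
    nlinarith
  · rw [hcP, hcA, hs]
    have : (((P.m i + 1) : ℤ) : ℝ) ≤ (((q + 1) * D : ℤ) : ℝ) := by exact_mod_cast key2
    push_cast at this ⊢
    nlinarith

lemma anc_subset {P Q : DyadicCube n} {k' : ℤ} (h : P.toSet ⊆ Q.toSet)
    (h1 : Q.k ≤ k') (h2 : k' ≤ P.k) : (anc P k').toSet ⊆ Q.toSet :=
  subset_of_mem_mem (by rw [anc_k]; exact h1) (subset_anc h2 P.corner_mem) (h P.corner_mem)

lemma unique_above {P Q₁ Q₂ : DyadicCube n} (h1 : P.toSet ⊆ Q₁.toSet)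
    (h2 : P.toSet ⊆ Q₂.toSet) (hk : Q₁.k = Q₂.k) : Q₁ = Q₂ :=
  eq_of_subset_of_k_eq
    (subset_of_mem_mem (by omega) (h1 P.corner_mem) (h2 P.corner_mem)) hk

end DyadicCube

section Sums

open DyadicCube

variable {n : ℕ}

lemma sigma_sub_ext {α T : Type*} {pred : α → T → Prop}
    (x y : Σ a : α, {t : T // pred a t}) (h1 : x.1 = y.1) (h2 : x.2.1 = y.2.1) : x = y := by
  obtain ⟨a, t, ht⟩ := x
  obtain ⟨b, s, hs⟩ := y
  dsimp at h1 h2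
  subst h1
  subst h2
  rfl

lemma level_sum (f : DyadicCube n → ℝ≥0∞)
    (hadd : ∀ Q : DyadicCube n,
      ∑' P : {P : DyadicCube n // P.toSet ⊆ Q.toSet ∧ P.k = Q.k + 1}, f P.1 = f Q) :
    ∀ (j : ℕ) (Q : DyadicCube n),
      ∑' P : {P : DyadicCube n // P.toSet ⊆ Q.toSet ∧ P.k = Q.k + (j:ℤ)}, f P.1 = f Q := by
  intro j
  induction j with
  | zero =>
    intro Q
    have ha : (⟨Q, Set.Subset.refl _, by simp⟩ :
        {P : DyadicCube n // P.toSet ⊆ Q.toSet ∧ P.k = Q.k + ((0:ℕ):ℤ)}) =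
        (⟨Q, Set.Subset.refl _, by simp⟩ : _) := rfl
    rw [tsum_eq_single (⟨Q, Set.Subset.refl _, by simp⟩ :
        {P : DyadicCube n // P.toSet ⊆ Q.toSet ∧ P.k = Q.k + ((0:ℕ):ℤ)})]
    intro b hb
    exfalso
    have hbQ : b.1 = Q :=
      eq_of_subset_of_k_eq b.2.1 (by have := b.2.2; push_cast at this; omega)
    exact hb (Subtype.ext hbQ)
  | succ j ih =>
    intro Q
    set Ch := {c : DyadicCube n // c.toSet ⊆ Q.toSet ∧ c.k = Q.k + 1} with hCh
    set φ : (Σ c : Ch, {P : DyadicCube n // P.toSet ⊆ c.1.toSet ∧ P.k = c.1.k + (j:ℤ)}) →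
        {P : DyadicCube n // P.toSet ⊆ Q.toSet ∧ P.k = Q.k + ((j+1:ℕ):ℤ)} :=
      fun x => ⟨x.2.1, x.2.2.1.trans x.1.2.1,
        by have h1 := x.2.2.2; have h2 := x.1.2.2; push_cast; omega⟩ with hφ
    have hbij : Function.Bijective φ := by
      constructor
      · intro x y hxy
        have hc : x.2.1 = y.2.1 := congrArg Subtype.val hxy
        have hk : x.1.1.k = y.1.1.k := by rw [x.1.2.2, y.1.2.2]
        have hcx : x.1 = y.1 := by
          apply Subtype.ext
          refine unique_above x.2.2.1 ?_ hk
          rw [hc]; exact y.2.2.1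
        exact sigma_sub_ext x y hcx hc
      · intro P
        have hkP : P.1.k = Q.k + (j:ℤ) + 1 := by have := P.2.2; push_cast at this; omega
        have hk1 : Q.k + 1 ≤ P.1.k := by omega
        refine ⟨⟨⟨anc P.1 (Q.k+1), anc_subset P.2.1 (by omega) hk1, rfl⟩,
          ⟨P.1, subset_anc hk1, by rw [anc_k]; omega⟩⟩, ?_⟩
        apply Subtype.ext
        rfl
    rw [← Equiv.tsum_eq (Equiv.ofBijective φ hbij) (fun P => f P.1), ENNReal.tsum_sigma']
    calc ∑' (c : Ch), ∑' (b : {P : DyadicCube n // P.toSet ⊆ c.1.toSet ∧ P.k = c.1.k + (j:ℤ)}),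
          f ((Equiv.ofBijective φ hbij) ⟨c, b⟩).1
        = ∑' (c : Ch), f c.1 := by
          apply tsum_congr
          intro c
          exact ih c.1
      _ = f Q := hadd Q

lemma tsum_subset_eq_sigma (hn : 0 < n) (Q : DyadicCube n) (f : DyadicCube n → ℝ≥0∞) :
    ∑' P : {P : DyadicCube n // P.toSet ⊆ Q.toSet}, f P.1 =
      ∑' (j : ℕ), ∑' P : {P : DyadicCube n // P.toSet ⊆ Q.toSet ∧ P.k = Q.k + (j:ℤ)}, f P.1 := by
  set φ : (Σ j : ℕ, {P : DyadicCube n // P.toSet ⊆ Q.toSet ∧ P.k = Q.k + (j:ℤ)}) →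
      {P : DyadicCube n // P.toSet ⊆ Q.toSet} := fun x => ⟨x.2.1, x.2.2.1⟩ with hφ
  have hbij : Function.Bijective φ := by
    constructor
    · intro x y hxy
      have hc : x.2.1 = y.2.1 := congrArg Subtype.val hxy
      have hj : x.1 = y.1 := by
        have h1 := x.2.2.2
        have h2 := y.2.2.2
        rw [hc] at h1
        omega
      exact sigma_sub_ext x y hj hc
    · intro P
      refine ⟨⟨(P.1.k - Q.k).toNat, ⟨P.1, P.2, ?_⟩⟩, ?_⟩
      · have := k_le_of_subset hn P.2; omega
      · apply Subtype.ext; rfl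
  rw [← Equiv.tsum_eq (Equiv.ofBijective φ hbij) (fun P => f P.1), ENNReal.tsum_sigma']
  rfl

lemma tsum_superset_le (hn : 0 < n) (P : DyadicCube n) (φ : ℕ → ℝ≥0∞) :
    ∑' Q : {Q : DyadicCube n // P.toSet ⊆ Q.toSet}, φ ((P.k - Q.1.k).toNat) ≤ ∑' j : ℕ, φ j := by
  have hinj : Function.Injective
      (fun Q : {Q : DyadicCube n // P.toSet ⊆ Q.toSet} => (P.k - Q.1.k).toNat) := by
    intro a b h
    dsimp at h
    have ha := k_le_of_subset hn a.2
    have hb := k_le_of_subset hn b.2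
    have : a.1.k = b.1.k := by omega
    exact Subtype.ext (unique_above a.2 b.2 this)
  exact ENNReal.tsum_comp_le_tsum_of_injective hinj φ

lemma ennreal_holder {ι : Type*} (w g : ι → ℝ≥0∞) {p : ℝ} (hp : 1 ≤ p) :
    (∑' i, w i * g i) ^ p ≤ (∑' i, w i) ^ (p - 1) * ∑' i, w i * g i ^ p := by
  rcases eq_or_lt_of_le hp with h1 | h1
  · rw [← h1]
    simp [ENNReal.rpow_one]
  · have hp0 : (0:ℝ) < p := lt_trans one_pos h1
    have hp0' : p ≠ 0 := ne_of_gt hp0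
    have hp1 : p - 1 ≠ 0 := by linarith
    letI : MeasurableSpace ι := ⊤
    haveI : MeasurableSingletonClass ι := ⟨fun _ => trivial⟩
    have hmeas : ∀ h : ι → ℝ≥0∞, Measurable h := fun h s _ => trivial
    set q : ℝ := p / (p - 1) with hqdef
    have hpq : p.HolderConjugate q := Real.HolderConjugate.conjExponent h1
    set a : ι → ℝ≥0∞ := fun i => w i ^ (1 - 1/p) with ha
    set b : ι → ℝ≥0∞ := fun i => w i ^ (1/p) * g i with hb
    have hba : ∀ i, (b * a) i = w i * g i := by
      intro i
      simp only [Pi.mul_apply, ha, hb]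
      rw [mul_comm (w i ^ (1/p)) (g i), mul_assoc, ← ENNReal.rpow_add_of_nonneg _ _
        (by positivity) (by rw [sub_nonneg]; rw [div_le_one hp0]; exact hp)]
      rw [show 1/p + (1 - 1/p) = 1 by ring, ENNReal.rpow_one]
      ring
    have haq : ∀ i, a i ^ q = w i := by
      intro i
      rw [ha]
      rw [← ENNReal.rpow_mul]
      rw [show (1 - 1/p) * q = 1 by rw [hqdef]; field_simp]
      exact ENNReal.rpow_one _
    have hbp : ∀ i, b i ^ p = w i * g i ^ p := by
      intro i
      rw [hb, ENNReal.mul_rpow_of_nonneg _ _ hp0.le, ← ENNReal.rpow_mul,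
        show (1/p) * p = 1 by field_simp, ENNReal.rpow_one]
    have hH := ENNReal.lintegral_mul_le_Lp_mul_Lq (MeasureTheory.Measure.count (α := ι)) hpq
      (hmeas b).aemeasurable (hmeas a).aemeasurable
    rw [MeasureTheory.lintegral_count] at hH
    rw [MeasureTheory.lintegral_count, MeasureTheory.lintegral_count] at hH
    have hH2 : (∑' i, w i * g i) ≤ (∑' i, w i * g i ^ p) ^ (1/p) * (∑' i, w i) ^ (1/q) := by
      calc (∑' i, w i * g i) = ∑' i, (b * a) i := by
            apply tsum_congr; intro i; rw [hba]
        _ ≤ (∑' i, b i ^ p) ^ (1/p) * (∑' i, a i ^ q) ^ (1/q) := hH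
        _ = (∑' i, w i * g i ^ p) ^ (1/p) * (∑' i, w i) ^ (1/q) := by
            congr 1
            · congr 1; apply tsum_congr; intro i; rw [hbp]
            · congr 1; apply tsum_congr; intro i; rw [haq]
    calc (∑' i, w i * g i) ^ p
        ≤ ((∑' i, w i * g i ^ p) ^ (1/p) * (∑' i, w i) ^ (1/q)) ^ p :=
          ENNReal.rpow_le_rpow hH2 hp0.le
      _ = (∑' i, w i) ^ (p - 1) * ∑' i, w i * g i ^ p := by
          rw [ENNReal.mul_rpow_of_nonneg _ _ hp0.le, ← ENNReal.rpow_mul, ← ENNReal.rpow_mul,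
            show (1/p) * p = 1 by field_simp,
            show (1/q) * p = p - 1 by rw [hqdef]; field_simp,
            ENNReal.rpow_one]
          ring

end Sums

section Main

open DyadicCube

lemma main_bound {n : ℕ} (hn : 0 < n) {p : ℝ} (hp : 1 ≤ p) (θE : ℝ≥0∞)
    (hθ0 : θE ≠ 0) (hθt : θE ≠ ⊤)
    (f g : DyadicCube n → ℝ≥0∞)
    (hf0 : ∀ Q, f Q ≠ 0) (hft : ∀ Q, f Q ≠ ⊤)
    (hdec : ∀ P Q : DyadicCube n, P.toSet ⊆ Q.toSet → f P ≤ θE ^ (P.k - Q.k).toNat * f Q)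
    (hadd : ∀ Q : DyadicCube n,
      ∑' P : {P : DyadicCube n // P.toSet ⊆ Q.toSet ∧ P.k = Q.k + 1}, f P.1 = f Q) :
    ∑' Q : DyadicCube n,
        ((∑' P : {P : DyadicCube n // P.toSet ⊆ Q.toSet}, f P.1 * g P.1) / f Q) ^ p
      ≤ ((1 - θE ^ (1/p))⁻¹) ^ p * ∑' Q : DyadicCube n, g Q ^ p := by
  have hp0 : (0:ℝ) < p := lt_of_lt_of_le one_pos hp
  have hp0' : p ≠ 0 := ne_of_gt hp0
  set A : ℝ≥0∞ := (1 - θE ^ (1/p))⁻¹ with hA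
  set a : DyadicCube n → DyadicCube n → ℝ := fun Q P' => ((P'.k - Q.k).toNat : ℝ) with ha
  set G : DyadicCube n → DyadicCube n → ℝ≥0∞ :=
    fun Q P' => (f P' / f Q) * θE ^ (a Q P' / p - a Q P') * g P' ^ p with hG
  have hθpow : ∀ x : ℝ, θE ^ x * θE ^ (-x) = 1 := by
    intro x
    rw [← ENNReal.rpow_add _ _ hθ0 hθt]
    simp
  have hgeo : ∑' (j:ℕ), θE ^ ((j:ℝ)/p) = A := by
    have hterm : ∀ j : ℕ, θE ^ ((j:ℝ)/p) = (θE ^ (1/p)) ^ j := by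
      intro j
      rw [← ENNReal.rpow_natCast (θE ^ (1/p)) j, ← ENNReal.rpow_mul]
      congr 1
      ring
    rw [tsum_congr hterm, ENNReal.tsum_geometric]
  -- step 1 : pointwise (in Q) Hölder bound
  have step1 : ∀ Q : DyadicCube n,
      ((∑' P : {P : DyadicCube n // P.toSet ⊆ Q.toSet}, f P.1 * g P.1) / f Q) ^ p
        ≤ A ^ (p-1) * ∑' P : {P : DyadicCube n // P.toSet ⊆ Q.toSet}, G Q P.1 := by
    intro Q
    set u : {P : DyadicCube n // P.toSet ⊆ Q.toSet} → ℝ≥0∞ :=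
      fun P => (f P.1 / f Q) * θE ^ (a Q P.1 / p) with hu
    set v : {P : DyadicCube n // P.toSet ⊆ Q.toSet} → ℝ≥0∞ :=
      fun P => θE ^ (-(a Q P.1 / p)) * g P.1 with hv
    have huv : ∀ P, u P * v P = (f P.1 / f Q) * g P.1 := by
      intro P
      simp only [hu, hv]
      calc (f P.1 / f Q) * θE ^ (a Q P.1 / p) * (θE ^ (-(a Q P.1 / p)) * g P.1)
          = (f P.1 / f Q) * g P.1 * (θE ^ (a Q P.1 / p) * θE ^ (-(a Q P.1 / p))) := by ring
        _ = (f P.1 / f Q) * g P.1 := by rw [hθpow]; ring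
    have hT : (∑' P : {P : DyadicCube n // P.toSet ⊆ Q.toSet}, f P.1 * g P.1) / f Q
        = ∑' P, u P * v P := by
      rw [div_eq_mul_inv, ← ENNReal.tsum_mul_right]
      apply tsum_congr
      intro P
      rw [huv P, div_eq_mul_inv]
      ring
    have hlevelsum : ∀ j : ℕ,
        ∑' P : {P : DyadicCube n // P.toSet ⊆ Q.toSet ∧ P.k = Q.k + (j:ℤ)}, (f P.1 / f Q) = 1 := by
      intro j
      have hl := level_sum f hadd j Q
      calc ∑' P : {P : DyadicCube n // P.toSet ⊆ Q.toSet ∧ P.k = Q.k + (j:ℤ)}, f P.1 / f Q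
          = (∑' P : {P : DyadicCube n // P.toSet ⊆ Q.toSet ∧ P.k = Q.k + (j:ℤ)}, f P.1) * (f Q)⁻¹ := by
            simp only [div_eq_mul_inv]
            exact ENNReal.tsum_mul_right
        _ = f Q * (f Q)⁻¹ := by rw [hl]
        _ = 1 := ENNReal.mul_inv_cancel (hf0 Q) (hft Q)
    have hsumu : ∑' P, u P = A := by
      have hrw := tsum_subset_eq_sigma hn Q
        (fun P' => (f P' / f Q) * θE ^ (((P'.k - Q.k).toNat : ℝ)/p))
      calc ∑' P, u P
          = ∑' (j:ℕ), ∑' P : {P : DyadicCube n // P.toSet ⊆ Q.toSet ∧ P.k = Q.k + (j:ℤ)},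
              (f P.1 / f Q) * θE ^ (((P.1.k - Q.k).toNat : ℝ)/p) := hrw
        _ = ∑' (j:ℕ), θE ^ ((j:ℝ)/p) := by
            apply tsum_congr
            intro j
            have hjeq : ∀ P : {P : DyadicCube n // P.toSet ⊆ Q.toSet ∧ P.k = Q.k + (j:ℤ)},
                (((P.1.k - Q.k).toNat : ℕ) : ℝ) = (j:ℝ) := by
              intro P
              have h2 := P.2.2
              have : (P.1.k - Q.k).toNat = j := by omega
              exact_mod_cast congrArg (fun z : ℕ => (z:ℝ)) this
            calc ∑' P : {P : DyadicCube n // P.toSet ⊆ Q.toSet ∧ P.k = Q.k + (j:ℤ)},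
                  (f P.1 / f Q) * θE ^ (((P.1.k - Q.k).toNat : ℝ)/p)
                = ∑' P : {P : DyadicCube n // P.toSet ⊆ Q.toSet ∧ P.k = Q.k + (j:ℤ)},
                    (f P.1 / f Q) * θE ^ ((j:ℝ)/p) := by
                  apply tsum_congr
                  intro P
                  rw [hjeq P]
              _ = (∑' P : {P : DyadicCube n // P.toSet ⊆ Q.toSet ∧ P.k = Q.k + (j:ℤ)},
                    (f P.1 / f Q)) * θE ^ ((j:ℝ)/p) := ENNReal.tsum_mul_right
              _ = θE ^ ((j:ℝ)/p) := by rw [hlevelsum j, one_mul]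
        _ = A := hgeo
    have hvp : ∀ P, u P * v P ^ p = G Q P.1 := by
      intro P
      simp only [hu, hv, hG]
      rw [ENNReal.mul_rpow_of_nonneg _ _ hp0.le, ← ENNReal.rpow_mul,
        show (-(a Q P.1 / p)) * p = -(a Q P.1) by field_simp,
        show a Q P.1 / p - a Q P.1 = a Q P.1 / p + (-(a Q P.1)) by ring,
        ENNReal.rpow_add _ _ hθ0 hθt]
      ring
    calc ((∑' P : {P : DyadicCube n // P.toSet ⊆ Q.toSet}, f P.1 * g P.1) / f Q) ^ p
        = (∑' P, u P * v P) ^ p := by rw [hT]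
      _ ≤ (∑' P, u P) ^ (p-1) * ∑' P, u P * v P ^ p := ennreal_holder u v hp
      _ = A ^ (p-1) * ∑' P : {P : DyadicCube n // P.toSet ⊆ Q.toSet}, G Q P.1 := by
          rw [hsumu]
          congr 1
          apply tsum_congr
          intro P
          exact hvp P
  -- step 2 : swap the order of summation and sum over ancestors
  have step2 : ∑' Q : DyadicCube n, ∑' P : {P : DyadicCube n // P.toSet ⊆ Q.toSet}, G Q P.1
      ≤ A * ∑' Q : DyadicCube n, g Q ^ p := by
    have hswap : ∑' Q : DyadicCube n, ∑' P : {P : DyadicCube n // P.toSet ⊆ Q.toSet}, G Q P.1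
        = ∑' P' : DyadicCube n, ∑' Q : {Q : DyadicCube n // P'.toSet ⊆ Q.toSet}, G Q.1 P' := by
      calc ∑' Q : DyadicCube n, ∑' P : {P : DyadicCube n // P.toSet ⊆ Q.toSet}, G Q P.1
          = ∑' Q : DyadicCube n, ∑' P' : DyadicCube n,
              Set.indicator {P' : DyadicCube n | P'.toSet ⊆ Q.toSet} (G Q) P' := by
            apply tsum_congr
            intro Q
            exact tsum_subtype _ _
        _ = ∑' P' : DyadicCube n, ∑' Q : DyadicCube n,
              Set.indicator {P'' : DyadicCube n | P''.toSet ⊆ Q.toSet} (G Q) P' := ENNReal.tsum_comm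
        _ = ∑' P' : DyadicCube n, ∑' Q : {Q : DyadicCube n // P'.toSet ⊆ Q.toSet}, G Q.1 P' := by
            apply tsum_congr
            intro P'
            calc ∑' Q : DyadicCube n, Set.indicator {P'' : DyadicCube n | P''.toSet ⊆ Q.toSet} (G Q) P'
                = ∑' Q : DyadicCube n,
                    Set.indicator {Q' : DyadicCube n | P'.toSet ⊆ Q'.toSet} (fun Q' => G Q' P') Q := by
                  apply tsum_congr
                  intro Q
                  by_cases h : P'.toSet ⊆ Q.toSet
                  · rw [Set.indicator_of_mem
                        (show P' ∈ {P'' : DyadicCube n | P''.toSet ⊆ Q.toSet} from h),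
                      Set.indicator_of_mem
                        (show Q ∈ {Q' : DyadicCube n | P'.toSet ⊆ Q'.toSet} from h)]
                  · rw [Set.indicator_of_notMem
                        (show P' ∉ {P'' : DyadicCube n | P''.toSet ⊆ Q.toSet} from h),
                      Set.indicator_of_notMem
                        (show Q ∉ {Q' : DyadicCube n | P'.toSet ⊆ Q'.toSet} from h)]
              _ = ∑' Q : {Q : DyadicCube n // P'.toSet ⊆ Q.toSet}, G Q.1 P' :=
                  (tsum_subtype _ _).symm
    rw [hswap]
    have hinner : ∀ P' : DyadicCube n,
        ∑' Q : {Q : DyadicCube n // P'.toSet ⊆ Q.toSet}, G Q.1 P' ≤ g P' ^ p * A := by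
      intro P'
      have hterm : ∀ Q : {Q : DyadicCube n // P'.toSet ⊆ Q.toSet},
          G Q.1 P' ≤ g P' ^ p * θE ^ (((P'.k - Q.1.k).toNat : ℝ)/p) := by
        intro Q
        have hd : f P' / f Q.1 ≤ θE ^ ((((P'.k - Q.1.k).toNat : ℕ)) : ℝ) := by
          rw [ENNReal.div_le_iff_le_mul (Or.inl (hf0 _)) (Or.inl (hft _))]
          calc f P' ≤ θE ^ (P'.k - Q.1.k).toNat * f Q.1 := hdec P' Q.1 Q.2
            _ = θE ^ ((((P'.k - Q.1.k).toNat : ℕ)) : ℝ) * f Q.1 := by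
                rw [ENNReal.rpow_natCast]
        have hb : a Q.1 P' = (((P'.k - Q.1.k).toNat : ℕ) : ℝ) := rfl
        calc G Q.1 P'
            = (f P' / f Q.1) * θE ^ (a Q.1 P' / p - a Q.1 P') * g P' ^ p := by rw [hG]
          _ ≤ θE ^ (a Q.1 P') * θE ^ (a Q.1 P' / p - a Q.1 P') * g P' ^ p := by
              rw [← hb] at hd
              exact mul_le_mul_left (mul_le_mul_left hd _) _
          _ = g P' ^ p * θE ^ (((P'.k - Q.1.k).toNat : ℝ)/p) := by
              rw [← ENNReal.rpow_add _ _ hθ0 hθt,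
                show a Q.1 P' + (a Q.1 P' / p - a Q.1 P') = a Q.1 P' / p by ring, hb]
              ring
      calc ∑' Q : {Q : DyadicCube n // P'.toSet ⊆ Q.toSet}, G Q.1 P'
          ≤ ∑' Q : {Q : DyadicCube n // P'.toSet ⊆ Q.toSet},
              g P' ^ p * θE ^ (((P'.k - Q.1.k).toNat : ℝ)/p) := ENNReal.tsum_le_tsum hterm
        _ ≤ ∑' j : ℕ, g P' ^ p * θE ^ ((j:ℝ)/p) :=
            tsum_superset_le hn P' (fun j => g P' ^ p * θE ^ ((j:ℝ)/p))
        _ = g P' ^ p * A := by rw [ENNReal.tsum_mul_left, hgeo]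
    calc ∑' P' : DyadicCube n, ∑' Q : {Q : DyadicCube n // P'.toSet ⊆ Q.toSet}, G Q.1 P'
        ≤ ∑' P' : DyadicCube n, g P' ^ p * A := ENNReal.tsum_le_tsum hinner
      _ = A * ∑' P' : DyadicCube n, g P' ^ p := by rw [ENNReal.tsum_mul_right, mul_comm]
  -- combine
  calc ∑' Q : DyadicCube n,
        ((∑' P : {P : DyadicCube n // P.toSet ⊆ Q.toSet}, f P.1 * g P.1) / f Q) ^ p
      ≤ ∑' Q : DyadicCube n,
          A ^ (p-1) * ∑' P : {P : DyadicCube n // P.toSet ⊆ Q.toSet}, G Q P.1 :=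
        ENNReal.tsum_le_tsum step1
    _ = A ^ (p-1) * ∑' Q : DyadicCube n,
          ∑' P : {P : DyadicCube n // P.toSet ⊆ Q.toSet}, G Q P.1 := ENNReal.tsum_mul_left
    _ ≤ A ^ (p-1) * (A * ∑' Q : DyadicCube n, g Q ^ p) := mul_le_mul_right step2 _
    _ = A ^ p * ∑' Q : DyadicCube n, g Q ^ p := by
        rw [← mul_assoc]
        congr 1
        calc A ^ (p-1) * A = A ^ (p-1) * A ^ (1:ℝ) := by rw [ENNReal.rpow_one]
          _ = A ^ (p-1+1) := (ENNReal.rpow_add_of_nonneg _ _ (by linarith) zero_le_one).symm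
          _ = A ^ p := by rw [show p - 1 + 1 = p by ring]

end Main

/-- The averaging operator `M'(R)(Q) = ν(Q)⁻¹ Σ_{P ⊆ Q} ν(P) R_P` is bounded on `ℓ^p`
for `1 ≤ p < ∞`, with constant depending only on `θ`, `p`, `n`, whenever `ν` satisfies the
geometric decay `ν(P) ≤ θ^k ν(Q)` and additivity over children. -/
theorem stmt12 (n : ℕ) (θ : ℝ) (hθ0 : 0 < θ) (hθ1 : θ < 1) (p : ℝ) (hp : 1 ≤ p) :
    ∃ C : ℝ≥0∞, C ≠ ⊤ ∧
      ∀ ν : DyadicCube n → ℝ, (∀ Q, 0 < ν Q) →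
        (∀ P Q : DyadicCube n, P.toSet ⊆ Q.toSet →
          ν P ≤ θ ^ (P.k - Q.k).toNat * ν Q) →
        (∀ Q : DyadicCube n,
          ∑' P : {P : DyadicCube n // P.toSet ⊆ Q.toSet ∧ P.k = Q.k + 1}, ν P.1 = ν Q) →
        ∀ R : DyadicCube n → ℝ, (∀ P, 0 ≤ R P) →
          ∑' Q : DyadicCube n,
              ((∑' P : {P : DyadicCube n // P.toSet ⊆ Q.toSet},
                  ENNReal.ofReal (ν P.1) * ENNReal.ofReal (R P.1)) /
                ENNReal.ofReal (ν Q)) ^ p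
            ≤ C ^ p * ∑' Q : DyadicCube n, ENNReal.ofReal (R Q) ^ p := by
  have hp0 : (0:ℝ) < p := lt_of_lt_of_le one_pos hp
  set θE : ℝ≥0∞ := ENNReal.ofReal θ with hθE
  have hθE0 : θE ≠ 0 := (ENNReal.ofReal_pos.mpr hθ0).ne'
  have hθEt : θE ≠ ⊤ := ENNReal.ofReal_ne_top
  have hθE1 : θE < 1 := ENNReal.ofReal_lt_one.mpr hθ1
  have ht1 : θE ^ (1/p) < 1 := ENNReal.rpow_lt_one hθE1 (by positivity)
  have hsub : (1:ℝ≥0∞) - θE ^ (1/p) ≠ 0 := by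
    intro h
    rw [tsub_eq_zero_iff_le] at h
    exact absurd h (not_le.mpr ht1)
  refine ⟨(1 - θE ^ (1/p))⁻¹, ENNReal.inv_ne_top.mpr hsub, ?_⟩
  intro ν hν hdec hadd R hR
  rcases Nat.eq_zero_or_pos n with hn | hn
  · subst hn
    exfalso
    have hsub1 : (⟨1, fun _ => 0⟩ : DyadicCube 0).toSet ⊆ (⟨0, fun _ => 0⟩ : DyadicCube 0).toSet :=
      fun x _ i => i.elim0
    have hsub2 : (⟨0, fun _ => 0⟩ : DyadicCube 0).toSet ⊆ (⟨1, fun _ => 0⟩ : DyadicCube 0).toSet :=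
      fun x _ i => i.elim0
    have h1 := hdec ⟨0, fun _ => 0⟩ ⟨1, fun _ => 0⟩ hsub2
    have h2 := hdec ⟨1, fun _ => 0⟩ ⟨0, fun _ => 0⟩ hsub1
    have e1 : (((⟨0, fun _ => 0⟩ : DyadicCube 0).k - (⟨1, fun _ => 0⟩ : DyadicCube 0).k).toNat) = 0 := rfl
    have e2 : (((⟨1, fun _ => 0⟩ : DyadicCube 0).k - (⟨0, fun _ => 0⟩ : DyadicCube 0).k).toNat) = 1 := rfl
    rw [e1, pow_zero, one_mul] at h1
    rw [e2, pow_one] at h2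
    nlinarith [hν (⟨0, fun _ => 0⟩ : DyadicCube 0), hν (⟨1, fun _ => 0⟩ : DyadicCube 0)]
  · have hf0 : ∀ Q : DyadicCube n, ENNReal.ofReal (ν Q) ≠ 0 :=
      fun Q => (ENNReal.ofReal_pos.mpr (hν Q)).ne'
    have hft : ∀ Q : DyadicCube n, ENNReal.ofReal (ν Q) ≠ ⊤ := fun Q => ENNReal.ofReal_ne_top
    have hdecE : ∀ P Q : DyadicCube n, P.toSet ⊆ Q.toSet →
        ENNReal.ofReal (ν P) ≤ θE ^ (P.k - Q.k).toNat * ENNReal.ofReal (ν Q) := by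
      intro P Q h
      calc ENNReal.ofReal (ν P)
          ≤ ENNReal.ofReal (θ ^ (P.k - Q.k).toNat * ν Q) :=
            ENNReal.ofReal_le_ofReal (hdec P Q h)
        _ = ENNReal.ofReal (θ ^ (P.k - Q.k).toNat) * ENNReal.ofReal (ν Q) :=
            ENNReal.ofReal_mul (by positivity)
        _ = θE ^ (P.k - Q.k).toNat * ENNReal.ofReal (ν Q) := by
            rw [hθE, ← ENNReal.ofReal_pow hθ0.le]
    have haddE : ∀ Q : DyadicCube n,
        ∑' P : {P : DyadicCube n // P.toSet ⊆ Q.toSet ∧ P.k = Q.k + 1},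
          ENNReal.ofReal (ν P.1) = ENNReal.ofReal (ν Q) := by
      intro Q
      have hsummable : Summable
          (fun P : {P : DyadicCube n // P.toSet ⊆ Q.toSet ∧ P.k = Q.k + 1} => ν P.1) := by
        by_contra hs
        have h0 := tsum_eq_zero_of_not_summable hs
        rw [hadd Q] at h0
        exact absurd h0 (ne_of_gt (hν Q))
      calc ∑' P : {P : DyadicCube n // P.toSet ⊆ Q.toSet ∧ P.k = Q.k + 1},
            ENNReal.ofReal (ν P.1)
          = ENNReal.ofReal (∑' P : {P : DyadicCube n // P.toSet ⊆ Q.toSet ∧ P.k = Q.k + 1},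
              ν P.1) := (ENNReal.ofReal_tsum_of_nonneg (f := fun P : {P : DyadicCube n // P.toSet ⊆ Q.toSet ∧ P.k = Q.k + 1} => ν P.1) (fun P => (hν P.1).le) hsummable).symm
        _ = ENNReal.ofReal (ν Q) := by rw [hadd Q]
    exact main_bound hn hp θE hθE0 hθEt (fun Q => ENNReal.ofReal (ν Q))
      (fun Q => ENNReal.ofReal (R Q)) hf0 hft hdecE haddE
end
end

section
/- Let μ, λ ∈ A_2 on ℝ^n and ν = μ^{1/2}λ^{-1/2}. For every cube Q, one has the one-sided weighted Cauchy–Schwarz estimate: (1/ν(Q)) ∫_Q |b(x) − ⟨b⟩_Q| dx ≤ C · ((1/μ(Q)) ∫_Q |b(x) − ⟨b⟩_Q|^2 λ(x) dx)^{1/2}, where C depends only on [μ]_{A_2} and [λ]_{A_2}. -/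
open MeasureTheory Filter
open scoped ENNReal BigOperators

noncomputable section

private theorem myCS {alpha : Type*} [MeasurableSpace alpha] (nu : Measure alpha) {f g : alpha → ℝ}
    (hfm : AEStronglyMeasurable f nu) (hgm : AEStronglyMeasurable g nu)
    (hf0 : ∀ x, 0 ≤ f x) (hg0 : ∀ x, 0 ≤ g x)
    (hf2 : Integrable (fun x => f x ^ 2) nu) (hg2 : Integrable (fun x => g x ^ 2) nu) :
    ∫ x, f x * g x ∂nu ≤ Real.sqrt (∫ x, f x ^ 2 ∂nu) * Real.sqrt (∫ x, g x ^ 2 ∂nu) := by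
  have hc : Real.HolderConjugate 2 2 := Real.HolderConjugate.two_two
  have e2 : (ENNReal.ofReal 2) = 2 := by
    rw [show (2:ℝ) = ((2:ℕ):ℝ) by norm_num, ENNReal.ofReal_natCast]; norm_num
  have hfL : MemLp f (ENNReal.ofReal 2) nu := by
    rw [e2]; exact (memLp_two_iff_integrable_sq hfm).2 hf2
  have hgL : MemLp g (ENNReal.ofReal 2) nu := by
    rw [e2]; exact (memLp_two_iff_integrable_sq hgm).2 hg2
  have H := integral_mul_le_Lp_mul_Lq_of_nonneg hc (Filter.Eventually.of_forall hf0)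
    (Filter.Eventually.of_forall hg0) hfL hgL
  have h2 : ∀ x : ℝ, x ^ (2:ℝ) = x ^ 2 := fun x => by
    rw [show (2:ℝ) = ((2:ℕ):ℝ) by norm_num, Real.rpow_natCast]
  simp_rw [h2] at H
  rw [Real.sqrt_eq_rpow, Real.sqrt_eq_rpow]
  exact H

private theorem rpow_sq_eq {t : ℝ} (ht : 0 < t) (p : ℝ) : (t ^ p) ^ 2 = t ^ (2 * p) := by
  rw [← Real.rpow_natCast (t ^ p) 2, ← Real.rpow_mul ht.le]
  congr 1
  push_cast
  ring

private theorem cube_eq (n : ℕ) (c : Fin n → ℝ) (l : ℝ) :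
    cube n c l = Set.univ.pi fun i => Set.Ico (c i) (c i + l) := by
  ext x; simp [cube, Set.mem_pi]

/-- One-sided weighted Cauchy–Schwarz estimate: there is `C`, depending only on the `A_2`
bounds of `μ` and `λ`, such that for every cube `Q`,
`(1/ν(Q)) ∫_Q |b - ⟨b⟩_Q| ≤ C ((1/μ(Q)) ∫_Q |b - ⟨b⟩_Q|² λ)^{1/2}`,
where `ν = μ^{1/2} λ^{-1/2}`. -/
theorem stmt18 (n : ℕ) (Cμ Clam : ℝ) (hCμ : 0 ≤ Cμ) (hClam : 0 ≤ Clam) :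
    ∃ C : ℝ, 0 < C ∧
      ∀ μ lam : (Fin n → ℝ) → ℝ,
        (∀ x, 0 < μ x) → (∀ x, 0 < lam x) →
        IsApBound n 2 μ Cμ → IsApBound n 2 lam Clam →
        ∀ b : (Fin n → ℝ) → ℝ, ∀ c : Fin n → ℝ, ∀ l : ℝ, 0 < l →
          IntegrableOn b (cube n c l) volume →
          IntegrableOn μ (cube n c l) volume →
          IntegrableOn lam (cube n c l) volume →
          IntegrableOn (fun x => (μ x)⁻¹) (cube n c l) volume →
          IntegrableOn (fun x => (lam x)⁻¹) (cube n c l) volume →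
          IntegrableOn (fun x => μ x ^ ((1:ℝ)/2) * lam x ^ (-(1:ℝ)/2)) (cube n c l) volume →
          IntegrableOn (fun x => μ x ^ (-(1:ℝ)/2) * lam x ^ ((1:ℝ)/2)) (cube n c l) volume →
          IntegrableOn
            (fun x =>
              (b x - (volume (cube n c l)).toReal⁻¹ * ∫ z in cube n c l, b z) ^ 2 * lam x)
            (cube n c l) volume →
          0 < (∫ x in cube n c l, μ x) →
          0 < (∫ x in cube n c l, μ x ^ ((1:ℝ)/2) * lam x ^ (-(1:ℝ)/2)) →
          (∫ x in cube n c l, μ x ^ ((1:ℝ)/2) * lam x ^ (-(1:ℝ)/2))⁻¹ *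
              ∫ x in cube n c l,
                |b x - (volume (cube n c l)).toReal⁻¹ * ∫ z in cube n c l, b z|
            ≤ C * Real.sqrt
                ((∫ x in cube n c l, μ x)⁻¹ *
                  ∫ x in cube n c l,
                    (b x - (volume (cube n c l)).toReal⁻¹ * ∫ z in cube n c l, b z) ^ 2 *
                      lam x) := by
  classical
  refine ⟨Real.sqrt (Cμ * Clam) + 1, by positivity, ?_⟩
  intro μ lam hμpos hlampos hμ2 hlam2 b c l hl hb hμint hlamint hμinv hlaminv hNint hN'int hJint hA hN
  set C : ℝ := Real.sqrt (Cμ * Clam) + 1 with hC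
  set s : Set (Fin n → ℝ) := cube n c l with hsdef
  have hsm : MeasurableSet s := by
    rw [hsdef, cube_eq]
    exact MeasurableSet.univ_pi fun i => measurableSet_Ico
  set V : ℝ := (volume s).toReal with hVdef
  have hvol : volume s = ENNReal.ofReal l ^ n := by
    rw [hsdef, cube_eq, volume_pi_pi]
    simp [Real.volume_Ico]
  have hV : 0 < V := by
    rw [hVdef, hvol, ENNReal.toReal_pow, ENNReal.toReal_ofReal hl.le]
    positivity
  set m : ℝ := V⁻¹ * ∫ z in s, b z with hm
  set A : ℝ := ∫ x in s, μ x with hAdef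
  set B : ℝ := ∫ x in s, lam x with hBdef
  set A' : ℝ := ∫ x in s, (μ x)⁻¹ with hA'def
  set B' : ℝ := ∫ x in s, (lam x)⁻¹ with hB'def
  set N : ℝ := ∫ x in s, μ x ^ ((1:ℝ)/2) * lam x ^ (-(1:ℝ)/2) with hNdef
  set N' : ℝ := ∫ x in s, μ x ^ (-(1:ℝ)/2) * lam x ^ ((1:ℝ)/2) with hN'def
  set I : ℝ := ∫ x in s, |b x - m| with hI
  set J : ℝ := ∫ x in s, (b x - m) ^ 2 * lam x with hJ
  -- nonnegativity of various integrals
  have hB0 : 0 ≤ B := setIntegral_nonneg hsm fun x _ => (hlampos x).le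
  have hA'0 : 0 ≤ A' := setIntegral_nonneg hsm fun x _ => (inv_pos.2 (hμpos x)).le
  have hB'0 : 0 ≤ B' := setIntegral_nonneg hsm fun x _ => (inv_pos.2 (hlampos x)).le
  have hJ0 : 0 ≤ J := setIntegral_nonneg hsm fun x _ => mul_nonneg (sq_nonneg _) (hlampos x).le
  -- measurability
  have hbm : AEMeasurable b (volume.restrict s) := hb.aemeasurable
  have hμm : AEMeasurable μ (volume.restrict s) := hμint.aemeasurable
  have hlamm : AEMeasurable lam (volume.restrict s) := hlamint.aemeasurable
  -- Cauchy-Schwarz 1 :  I ≤ √B' * √J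
  have h1 : I ≤ Real.sqrt B' * Real.sqrt J := by
    have hfm : AEStronglyMeasurable (fun x => lam x ^ (-(1:ℝ)/2)) (volume.restrict s) :=
      (hlamm.pow aemeasurable_const).aestronglyMeasurable
    have hgm : AEStronglyMeasurable (fun x => |b x - m| * lam x ^ ((1:ℝ)/2))
        (volume.restrict s) :=
      (((measurable_abs.comp_aemeasurable (hbm.sub aemeasurable_const))).mul
        (hlamm.pow aemeasurable_const)).aestronglyMeasurable
    have ef2 : (fun x => (lam x ^ (-(1:ℝ)/2)) ^ 2) = fun x => (lam x)⁻¹ := by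
      funext x
      rw [rpow_sq_eq (hlampos x), show (2:ℝ) * (-(1:ℝ)/2) = -1 by norm_num,
        Real.rpow_neg_one]
    have eg2 : (fun x => (|b x - m| * lam x ^ ((1:ℝ)/2)) ^ 2)
        = fun x => (b x - m) ^ 2 * lam x := by
      funext x
      rw [mul_pow, sq_abs, rpow_sq_eq (hlampos x), show (2:ℝ) * ((1:ℝ)/2) = 1 by norm_num,
        Real.rpow_one]
    have efg : (fun x => lam x ^ (-(1:ℝ)/2) * (|b x - m| * lam x ^ ((1:ℝ)/2)))
        = fun x => |b x - m| := by
      funext x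
      rw [show lam x ^ (-(1:ℝ)/2) * (|b x - m| * lam x ^ ((1:ℝ)/2))
          = |b x - m| * (lam x ^ (-(1:ℝ)/2) * lam x ^ ((1:ℝ)/2)) by ring,
        ← Real.rpow_add (hlampos x)]
      norm_num
    have hf2 : Integrable (fun x => (lam x ^ (-(1:ℝ)/2)) ^ 2) (volume.restrict s) := by
      rw [ef2]; exact hlaminv
    have hg2 : Integrable (fun x => (|b x - m| * lam x ^ ((1:ℝ)/2)) ^ 2)
        (volume.restrict s) := by
      rw [eg2]; exact hJint
    have H := myCS (volume.restrict s) hfm hgm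
      (fun x => Real.rpow_nonneg (hlampos x).le _)
      (fun x => mul_nonneg (abs_nonneg _) (Real.rpow_nonneg (hlampos x).le _))
      hf2 hg2
    simp_rw [efg] at H
    rw [hI, hB'def, hJ]
    calc (∫ x in s, |b x - m|)
        ≤ Real.sqrt (∫ x in s, (lam x ^ (-(1:ℝ)/2)) ^ 2)
          * Real.sqrt (∫ x in s, (|b x - m| * lam x ^ ((1:ℝ)/2)) ^ 2) := H
      _ = _ := by rw [ef2, eg2]
  -- Cauchy-Schwarz 2 : V ≤ √N * √N'
  have h2 : V ≤ Real.sqrt N * Real.sqrt N' := by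
    have hfm : AEStronglyMeasurable (fun x => μ x ^ ((1:ℝ)/4) * lam x ^ (-(1:ℝ)/4))
        (volume.restrict s) :=
      ((hμm.pow aemeasurable_const).mul (hlamm.pow aemeasurable_const)).aestronglyMeasurable
    have hgm : AEStronglyMeasurable (fun x => μ x ^ (-(1:ℝ)/4) * lam x ^ ((1:ℝ)/4))
        (volume.restrict s) :=
      ((hμm.pow aemeasurable_const).mul (hlamm.pow aemeasurable_const)).aestronglyMeasurable
    have ef2 : (fun x => (μ x ^ ((1:ℝ)/4) * lam x ^ (-(1:ℝ)/4)) ^ 2)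
        = fun x => μ x ^ ((1:ℝ)/2) * lam x ^ (-(1:ℝ)/2) := by
      funext x
      rw [mul_pow, rpow_sq_eq (hμpos x), rpow_sq_eq (hlampos x),
        show (2:ℝ) * ((1:ℝ)/4) = (1:ℝ)/2 by norm_num,
        show (2:ℝ) * (-(1:ℝ)/4) = -(1:ℝ)/2 by norm_num]
    have eg2 : (fun x => (μ x ^ (-(1:ℝ)/4) * lam x ^ ((1:ℝ)/4)) ^ 2)
        = fun x => μ x ^ (-(1:ℝ)/2) * lam x ^ ((1:ℝ)/2) := by
      funext x
      rw [mul_pow, rpow_sq_eq (hμpos x), rpow_sq_eq (hlampos x),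
        show (2:ℝ) * (-(1:ℝ)/4) = -(1:ℝ)/2 by norm_num,
        show (2:ℝ) * ((1:ℝ)/4) = (1:ℝ)/2 by norm_num]
    have efg : (fun x => (μ x ^ ((1:ℝ)/4) * lam x ^ (-(1:ℝ)/4))
          * (μ x ^ (-(1:ℝ)/4) * lam x ^ ((1:ℝ)/4))) = fun _x => (1:ℝ) := by
      funext x
      rw [show (μ x ^ ((1:ℝ)/4) * lam x ^ (-(1:ℝ)/4)) * (μ x ^ (-(1:ℝ)/4) * lam x ^ ((1:ℝ)/4))
          = (μ x ^ ((1:ℝ)/4) * μ x ^ (-(1:ℝ)/4)) * (lam x ^ (-(1:ℝ)/4) * lam x ^ ((1:ℝ)/4))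
          by ring,
        ← Real.rpow_add (hμpos x), ← Real.rpow_add (hlampos x)]
      norm_num
    have hf2 : Integrable (fun x => (μ x ^ ((1:ℝ)/4) * lam x ^ (-(1:ℝ)/4)) ^ 2)
        (volume.restrict s) := by rw [ef2]; exact hNint
    have hg2 : Integrable (fun x => (μ x ^ (-(1:ℝ)/4) * lam x ^ ((1:ℝ)/4)) ^ 2)
        (volume.restrict s) := by rw [eg2]; exact hN'int
    have H := myCS (volume.restrict s) hfm hgm
      (fun x => mul_nonneg (Real.rpow_nonneg (hμpos x).le _) (Real.rpow_nonneg (hlampos x).le _))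
      (fun x => mul_nonneg (Real.rpow_nonneg (hμpos x).le _) (Real.rpow_nonneg (hlampos x).le _))
      hf2 hg2
    simp_rw [efg] at H
    have hone : (∫ _x in s, (1:ℝ)) = V := by
      rw [setIntegral_const, smul_eq_mul, mul_one]; rfl
    calc V = ∫ _x in s, (1:ℝ) := hone.symm
      _ ≤ Real.sqrt (∫ x in s, (μ x ^ ((1:ℝ)/4) * lam x ^ (-(1:ℝ)/4)) ^ 2)
          * Real.sqrt (∫ x in s, (μ x ^ (-(1:ℝ)/4) * lam x ^ ((1:ℝ)/4)) ^ 2) := H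
      _ = Real.sqrt N * Real.sqrt N' := by rw [ef2, eg2, hNdef, hN'def]
  -- Cauchy-Schwarz 3 : N' ≤ √A' * √B
  have h3 : N' ≤ Real.sqrt A' * Real.sqrt B := by
    have hfm : AEStronglyMeasurable (fun x => μ x ^ (-(1:ℝ)/2)) (volume.restrict s) :=
      (hμm.pow aemeasurable_const).aestronglyMeasurable
    have hgm : AEStronglyMeasurable (fun x => lam x ^ ((1:ℝ)/2)) (volume.restrict s) :=
      (hlamm.pow aemeasurable_const).aestronglyMeasurable
    have ef2 : (fun x => (μ x ^ (-(1:ℝ)/2)) ^ 2) = fun x => (μ x)⁻¹ := by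
      funext x
      rw [rpow_sq_eq (hμpos x), show (2:ℝ) * (-(1:ℝ)/2) = -1 by norm_num, Real.rpow_neg_one]
    have eg2 : (fun x => (lam x ^ ((1:ℝ)/2)) ^ 2) = fun x => lam x := by
      funext x
      rw [rpow_sq_eq (hlampos x), show (2:ℝ) * ((1:ℝ)/2) = 1 by norm_num, Real.rpow_one]
    have hf2 : Integrable (fun x => (μ x ^ (-(1:ℝ)/2)) ^ 2) (volume.restrict s) := by
      rw [ef2]; exact hμinv
    have hg2 : Integrable (fun x => (lam x ^ ((1:ℝ)/2)) ^ 2) (volume.restrict s) := by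
      rw [eg2]; exact hlamint
    have H := myCS (volume.restrict s) hfm hgm
      (fun x => Real.rpow_nonneg (hμpos x).le _)
      (fun x => Real.rpow_nonneg (hlampos x).le _) hf2 hg2
    calc N' = ∫ x in s, μ x ^ (-(1:ℝ)/2) * lam x ^ ((1:ℝ)/2) := hN'def
      _ ≤ Real.sqrt (∫ x in s, (μ x ^ (-(1:ℝ)/2)) ^ 2)
          * Real.sqrt (∫ x in s, (lam x ^ ((1:ℝ)/2)) ^ 2) := H
      _ = Real.sqrt A' * Real.sqrt B := by rw [ef2, eg2, hA'def, hBdef]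
  -- A2 conditions
  have hAA' : A * A' ≤ Cμ * V ^ 2 := by
    have h := hμ2 c l hl
    rw [show -(1/((2:ℝ)-1)) = (-1 : ℝ) by norm_num, show (2:ℝ)-1 = 1 by norm_num,
      Real.rpow_one] at h
    simp_rw [Real.rpow_neg_one] at h
    have h' := mul_le_mul_of_nonneg_right h (sq_nonneg V)
    calc A * A' = A * A' * (V⁻¹ * V) ^ 2 := by rw [inv_mul_cancel₀ hV.ne']; ring
      _ = (V⁻¹ * A * (V⁻¹ * A')) * V ^ 2 := by ring
      _ ≤ Cμ * V ^ 2 := h'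
  have hBB' : B * B' ≤ Clam * V ^ 2 := by
    have h := hlam2 c l hl
    rw [show -(1/((2:ℝ)-1)) = (-1 : ℝ) by norm_num, show (2:ℝ)-1 = 1 by norm_num,
      Real.rpow_one] at h
    simp_rw [Real.rpow_neg_one] at h
    have h' := mul_le_mul_of_nonneg_right h (sq_nonneg V)
    calc B * B' = B * B' * (V⁻¹ * V) ^ 2 := by rw [inv_mul_cancel₀ hV.ne']; ring
      _ = (V⁻¹ * B * (V⁻¹ * B')) * V ^ 2 := by ring
      _ ≤ Clam * V ^ 2 := h'
  -- positivity of N'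
  have hNN' : V ^ 2 ≤ N * N' := by
    have := pow_le_pow_left₀ hV.le h2 2
    rwa [mul_pow, Real.sq_sqrt hN.le, Real.sq_sqrt (by
      by_contra hc'
      push_neg at hc'
      have : Real.sqrt N' = 0 := Real.sqrt_eq_zero'.2 hc'.le
      rw [this, mul_zero] at h2
      linarith)] at this
  have hN' : 0 < N' := by
    have h6 : 0 < N * N' := lt_of_lt_of_le (by positivity) hNN'
    rcases mul_pos_iff.1 h6 with ⟨_, h⟩ | ⟨h, _⟩
    · exact h
    · exact absurd h (not_lt.2 hN.le)
  -- key estimate : √A * √B' ≤ C * N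
  have key3 : Real.sqrt A * Real.sqrt B' * (Real.sqrt A' * Real.sqrt B)
      ≤ Real.sqrt (Cμ * Clam) * V ^ 2 := by
    have hprod : A * A' * (B * B') ≤ (Cμ * V ^ 2) * (Clam * V ^ 2) :=
      mul_le_mul hAA' hBB' (mul_nonneg hB0 hB'0) (by positivity)
    calc Real.sqrt A * Real.sqrt B' * (Real.sqrt A' * Real.sqrt B)
        = Real.sqrt A * Real.sqrt A' * (Real.sqrt B * Real.sqrt B') := by ring
      _ = Real.sqrt (A * A') * Real.sqrt (B * B') := by
          rw [← Real.sqrt_mul hA.le, ← Real.sqrt_mul hB0]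
      _ = Real.sqrt (A * A' * (B * B')) := (Real.sqrt_mul (by positivity) _).symm
      _ ≤ Real.sqrt ((Cμ * V ^ 2) * (Clam * V ^ 2)) := Real.sqrt_le_sqrt hprod
      _ = Real.sqrt (Cμ * Clam) * V ^ 2 := by
          rw [show (Cμ * V ^ 2) * (Clam * V ^ 2) = (Cμ * Clam) * (V ^ 2) ^ 2 by ring,
            Real.sqrt_mul (by positivity), Real.sqrt_sq (by positivity)]
  have key2 : Real.sqrt A * Real.sqrt B' ≤ C * N := by
    have h4 : Real.sqrt A * Real.sqrt B' * N' ≤ Real.sqrt (Cμ * Clam) * V ^ 2 :=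
      calc Real.sqrt A * Real.sqrt B' * N'
          ≤ Real.sqrt A * Real.sqrt B' * (Real.sqrt A' * Real.sqrt B) :=
            mul_le_mul_of_nonneg_left h3 (by positivity)
        _ ≤ Real.sqrt (Cμ * Clam) * V ^ 2 := key3
    have h5 : Real.sqrt A * Real.sqrt B' * N' ≤ (C * N) * N' := by
      calc Real.sqrt A * Real.sqrt B' * N' ≤ Real.sqrt (Cμ * Clam) * V ^ 2 := h4
        _ ≤ Real.sqrt (Cμ * Clam) * (N * N') :=
            mul_le_mul_of_nonneg_left hNN' (Real.sqrt_nonneg _)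
        _ ≤ (C * N) * N' := by
            rw [hC]
            have he : (Real.sqrt (Cμ * Clam) + 1) * N * N'
                = Real.sqrt (Cμ * Clam) * (N * N') + N * N' := by ring
            rw [he]
            linarith [mul_nonneg hN.le hN'.le]
    exact le_of_mul_le_mul_right h5 hN'
  -- conclusion
  rw [Real.sqrt_mul (inv_nonneg.2 hA.le), Real.sqrt_inv]
  rw [show N⁻¹ * I = I / N by ring, show C * ((Real.sqrt A)⁻¹ * Real.sqrt J)
    = C * Real.sqrt J / Real.sqrt A by ring]
  rw [div_le_div_iff₀ hN (Real.sqrt_pos.2 hA)]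
  calc I * Real.sqrt A ≤ (Real.sqrt B' * Real.sqrt J) * Real.sqrt A :=
        mul_le_mul_of_nonneg_right h1 (Real.sqrt_nonneg _)
    _ = (Real.sqrt A * Real.sqrt B') * Real.sqrt J := by ring
    _ ≤ (C * N) * Real.sqrt J :=
        mul_le_mul_of_nonneg_right key2 (Real.sqrt_nonneg _)
    _ = C * Real.sqrt J * N := by ring
end
end

section
/- Let D be the standard dyadic system in ℝ^n and, for ω ∈ {0, 1/3, 2/3}^n, let D^ω be the shifted dyadic system with D^ω_k = {2^{-k}([0,1)^n + m + (−1)^k ω) : m ∈ ℤ^n}. Then each D^ω is nested: for any Q, Q' ∈ D^ω, the intersection Q ∩ Q' is either Q, Q', or empty. -/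
open MeasureTheory Filter
open scoped ENNReal BigOperators

noncomputable section

/-- The shifted dyadic cube `2^{-k}([0,1)^n + m + (-1)^k ω)` of the system `D^ω`. -/
def shiftedCube (n : ℕ) (ω : Fin n → ℝ) (k : ℤ) (m : Fin n → ℤ) : Set (Fin n → ℝ) :=
  cube n (fun i => (2:ℝ) ^ (-k) * ((m i : ℝ) + ((-1:ℝ)) ^ k * ω i)) ((2:ℝ) ^ (-k))

lemma pow2_mod3 (d : ℕ) : ∃ c : ℤ, (2:ℤ)^d = 3*c + (-1)^d := by
  induction d with
  | zero => exact ⟨0, by norm_num⟩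
  | succ d ih =>
    obtain ⟨c, hc⟩ := ih
    exact ⟨2*c + (-1)^d, by rw [pow_succ, hc, pow_succ]; ring⟩

lemma oneD (a a' δ L : ℝ) (hδ : 0 < δ) (t : ℤ) (ht : a' - a = t * δ)
    (N : ℤ) (hL : L = N * δ) :
    Set.Ico a' (a'+δ) ⊆ Set.Ico a (a+L) ∨
      Disjoint (Set.Ico a' (a'+δ)) (Set.Ico a (a+L)) := by
  rcases lt_or_ge t 0 with h | h
  · right
    rw [Set.disjoint_left]
    intro x hx hx'
    simp only [Set.mem_Ico] at hx hx'
    have : (t:ℝ) ≤ -1 := by have h1 : t ≤ -1 := by omega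
                            exact_mod_cast h1
    nlinarith [hx.1, hx.2, hx'.1, hx'.2]
  rcases le_or_gt N t with h2 | h2
  · right
    rw [Set.disjoint_left]
    intro x hx hx'
    simp only [Set.mem_Ico] at hx hx'
    have : (N:ℝ) ≤ t := by exact_mod_cast h2
    nlinarith [hx.1, hx.2, hx'.1, hx'.2]
  · left
    have h3 : (t:ℝ) + 1 ≤ N := by exact_mod_cast h2
    have h0 : (0:ℝ) ≤ t := by exact_mod_cast h
    apply Set.Ico_subset_Ico <;> nlinarith

lemma key_shift (k k' : ℤ) (hk : k ≤ k') (mi m'i : ℤ) (ωi : ℝ)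
    (hωi : ωi = 0 ∨ ωi = 1/3 ∨ ωi = 2/3) :
    ∃ t : ℤ, (2:ℝ) ^ (-k') * ((m'i : ℝ) + ((-1:ℝ)) ^ k' * ωi)
      - (2:ℝ) ^ (-k) * ((mi : ℝ) + ((-1:ℝ)) ^ k * ωi) = t * (2:ℝ)^(-k') := by
  set d : ℕ := (k' - k).toNat with hdd
  have hd : k' = k + d := by
    have := Int.toNat_of_nonneg (sub_nonneg.mpr hk)
    omega
  have h2 : (2:ℝ)^(-k) = (2:ℝ)^(-k') * (2:ℝ)^d := by
    rw [← zpow_natCast (2:ℝ) d, ← zpow_add₀ (by norm_num : (2:ℝ) ≠ 0)]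
    congr 1; omega
  have hneg : ((-1:ℝ))^k' = ((-1:ℝ))^k * ((-1:ℝ))^d := by
    rw [← zpow_natCast (-1:ℝ) d, ← zpow_add₀ (by norm_num : (-1:ℝ) ≠ 0), ← hd]
  obtain ⟨e, he⟩ : ∃ e : ℤ, ((-1:ℝ))^k = (e:ℝ) := by
    rcases Int.even_or_odd k with h | h
    · exact ⟨1, by rw [h.neg_one_zpow]; norm_num⟩
    · exact ⟨-1, by rw [h.neg_one_zpow]; norm_num⟩
  obtain ⟨j, hj⟩ : ∃ j : ℤ, ωi = (j:ℝ)/3 := by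
    rcases hωi with h | h | h
    exacts [⟨0, by rw [h]; norm_num⟩, ⟨1, by rw [h]; norm_num⟩, ⟨2, by rw [h]; norm_num⟩]
  obtain ⟨c, hc⟩ := pow2_mod3 d
  have hcr : (2:ℝ)^d = 3*(c:ℝ) + (-1:ℝ)^d := by exact_mod_cast hc
  refine ⟨m'i - 2^d * mi - e * c * j, ?_⟩
  rw [h2, hneg, he, hj]
  push_cast
  linear_combination (-(2:ℝ)^(-k') * (e:ℝ) * (j:ℝ) / 3) * hcr

lemma nested_aux (n : ℕ)
    (ω : Fin n → ℝ) (hω : ∀ i, ω i = 0 ∨ ω i = 1/3 ∨ ω i = 2/3)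
    (k : ℤ) (m : Fin n → ℤ) (k' : ℤ) (m' : Fin n → ℤ) (hk : k ≤ k') :
    shiftedCube n ω k' m' ⊆ shiftedCube n ω k m ∨
      shiftedCube n ω k m ∩ shiftedCube n ω k' m' = ∅ := by
  have hδ : (0:ℝ) < (2:ℝ)^(-k') := by positivity
  have hL : (2:ℝ)^(-k) = ((2:ℤ)^((k'-k).toNat) : ℤ) * (2:ℝ)^(-k') := by
    push_cast
    rw [← zpow_natCast (2:ℝ), ← zpow_add₀ (by norm_num : (2:ℝ) ≠ 0)]
    congr 1
    have := Int.toNat_of_nonneg (sub_nonneg.mpr hk)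
    omega
  have H : ∀ i, Set.Ico ((2:ℝ) ^ (-k') * ((m' i : ℝ) + ((-1:ℝ)) ^ k' * ω i))
        ((2:ℝ) ^ (-k') * ((m' i : ℝ) + ((-1:ℝ)) ^ k' * ω i) + (2:ℝ)^(-k')) ⊆
      Set.Ico ((2:ℝ) ^ (-k) * ((m i : ℝ) + ((-1:ℝ)) ^ k * ω i))
        ((2:ℝ) ^ (-k) * ((m i : ℝ) + ((-1:ℝ)) ^ k * ω i) + (2:ℝ)^(-k)) ∨
      Disjoint (Set.Ico ((2:ℝ) ^ (-k') * ((m' i : ℝ) + ((-1:ℝ)) ^ k' * ω i))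
        ((2:ℝ) ^ (-k') * ((m' i : ℝ) + ((-1:ℝ)) ^ k' * ω i) + (2:ℝ)^(-k')))
        (Set.Ico ((2:ℝ) ^ (-k) * ((m i : ℝ) + ((-1:ℝ)) ^ k * ω i))
        ((2:ℝ) ^ (-k) * ((m i : ℝ) + ((-1:ℝ)) ^ k * ω i) + (2:ℝ)^(-k))) := by
    intro i
    obtain ⟨t, ht⟩ := key_shift k k' hk (m i) (m' i) (ω i) (hω i)
    exact oneD _ _ _ _ hδ t ht _ hL
  by_cases hall : ∀ i, Set.Ico ((2:ℝ) ^ (-k') * ((m' i : ℝ) + ((-1:ℝ)) ^ k' * ω i))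
        ((2:ℝ) ^ (-k') * ((m' i : ℝ) + ((-1:ℝ)) ^ k' * ω i) + (2:ℝ)^(-k')) ⊆
      Set.Ico ((2:ℝ) ^ (-k) * ((m i : ℝ) + ((-1:ℝ)) ^ k * ω i))
        ((2:ℝ) ^ (-k) * ((m i : ℝ) + ((-1:ℝ)) ^ k * ω i) + (2:ℝ)^(-k))
  · left
    intro x hx i
    have := hall i (by exact ⟨(hx i).1, (hx i).2⟩ : x i ∈ Set.Ico _ _)
    exact ⟨this.1, this.2⟩
  · right
    push_neg at hall
    obtain ⟨i, hi⟩ := hall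
    have hdisj := (H i).resolve_left hi
    ext x
    simp only [Set.mem_inter_iff, Set.mem_empty_iff_false, iff_false, not_and]
    intro hx hx'
    exact Set.disjoint_left.mp hdisj ⟨(hx' i).1, (hx' i).2⟩ ⟨(hx i).1, (hx i).2⟩

/-- Nestedness of the shifted dyadic systems `D^ω`, `ω ∈ {0, 1/3, 2/3}^n`: any two cubes of
`D^ω` intersect in one of them or are disjoint. -/
theorem stmt19 (n : ℕ)
    (ω : Fin n → ℝ) (hω : ∀ i, ω i = 0 ∨ ω i = 1/3 ∨ ω i = 2/3)
    (k : ℤ) (m : Fin n → ℤ) (k' : ℤ) (m' : Fin n → ℤ) :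
    shiftedCube n ω k m ∩ shiftedCube n ω k' m' = shiftedCube n ω k m ∨
    shiftedCube n ω k m ∩ shiftedCube n ω k' m' = shiftedCube n ω k' m' ∨
    shiftedCube n ω k m ∩ shiftedCube n ω k' m' = ∅ := by
  rcases le_total k k' with hk | hk
  · rcases nested_aux n ω hω k m k' m' hk with h | h
    · right; left; exact Set.inter_eq_right.mpr h
    · right; right; exact h
  · rcases nested_aux n ω hω k' m' k m hk with h | h
    · left; exact Set.inter_eq_left.mpr h
    · right; right; rw [Set.inter_comm]; exact h
end
end
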